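/- arXiv:1101.5767 — 2 statements merged into one kernel-verified Lean document; each statement's English description precedes it below -/
import Mathlib

section
/- Let g ≥ 2. Consider the graph whose vertices are the primitive vectors of H = ℤ^{2g}, with an edge between distinct vertices v and w whenever ω(v,w) = 0 and gcd(v,w) = 1 (i.e. v and w span a rank-2 isotropic direct summand of H). Then this graph is connected: any two primitive vectors are joined by a finite path of such edges. (This is the 0-connectivity part of the proposition that the complex Λ(g) of ordered bases of isotropic direct summands of H is (g−2)-connected.) -/
namespace Paper

/-- The standard symplectic form on `R^{2g}` with respect to the basis
`a_1, b_1, …, a_g, b_g` (coordinates `2i, 2i+1` for `a_{i+1}, b_{i+1}`). -/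
def symp {R : Type*} [CommRing R] {g : ℕ} (x y : Fin (2 * g) → R) : R :=
  ∑ i : Fin g,
    (x ⟨2 * i.1, by omega⟩ * y ⟨2 * i.1 + 1, by omega⟩ -
      x ⟨2 * i.1 + 1, by omega⟩ * y ⟨2 * i.1, by omega⟩)

theorem symp_add_left {R : Type*} [CommRing R] {g : ℕ} (x y a : Fin (2 * g) → R) :
    symp (x + y) a = symp x a + symp y a := by
  unfold symp
  rw [← Finset.sum_add_distrib]
  exact Finset.sum_congr rfl fun i _ => by simp only [Pi.add_apply]; ring

theorem symp_smul_left {R : Type*} [CommRing R] {g : ℕ} (c : R) (x a : Fin (2 * g) → R) :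
    symp (c • x) a = c * symp x a := by
  unfold symp
  rw [Finset.mul_sum]
  exact Finset.sum_congr rfl fun i _ => by simp only [Pi.smul_apply, smul_eq_mul]; ring

theorem symp_zero_left {R : Type*} [CommRing R] {g : ℕ} (a : Fin (2 * g) → R) :
    symp (0 : Fin (2 * g) → R) a = 0 := by
  unfold symp; simp

/-- The orthogonal complement `A^⊥ = {x | ω(x,a) = 0 for all a ∈ A}`. -/
def perp {R : Type*} [CommRing R] {g : ℕ} (A : Set (Fin (2 * g) → R)) :
    Submodule R (Fin (2 * g) → R) where
  carrier := {x | ∀ a ∈ A, symp x a = 0}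
  add_mem' := by
    intro x y hx hy a ha
    rw [symp_add_left, hx a ha, hy a ha, add_zero]
  zero_mem' := by
    intro a ha
    exact symp_zero_left a
  smul_mem' := by
    intro c x hx a ha
    rw [symp_smul_left, hx a ha, mul_zero]

/-- The submodule of vectors whose first `m` coordinates vanish.
`H_k = coordZero R (2*g) (2*(k-1))`, and `H₂ = coordZero R (2*(g+1)) 2`. -/
def coordZero (R : Type*) [CommRing R] (n m : ℕ) : Submodule R (Fin n → R) where
  carrier := {v | ∀ j : Fin n, (j : ℕ) < m → v j = 0}
  add_mem' := by
    intro x y hx hy j hj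
    have h1 := hx j hj
    have h2 := hy j hj
    simp [Pi.add_apply, h1, h2]
  zero_mem' := by intro j hj; rfl
  smul_mem' := by
    intro c x hx j hj
    have h1 := hx j hj
    simp [Pi.smul_apply, h1]

/-- The standard basis vector `a_{i+1}` (`i` is 0-indexed). -/
def stdA (R : Type*) [CommRing R] (g i : ℕ) : Fin (2 * g) → R :=
  fun j => if (j : ℕ) = 2 * i then 1 else 0

/-- The standard basis vector `b_{i+1}` (`i` is 0-indexed). -/
def stdB (R : Type*) [CommRing R] (g i : ℕ) : Fin (2 * g) → R :=
  fun j => if (j : ℕ) = 2 * i + 1 then 1 else 0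

/-- Regard an integer vector as a rational vector. -/
def qcast {n : ℕ} (v : Fin n → ℤ) : Fin n → ℚ := fun j => (v j : ℚ)

/-- The projection `pr₂` deleting the `a_1`- and `b_1`-coordinates. -/
def pr2 {R : Type*} [CommRing R] {n : ℕ} (v : Fin n → R) : Fin n → R :=
  fun j => if (j : ℕ) < 2 then 0 else v j

/-- `gcd(v_1, …, v_m) = 1`: the vectors are linearly independent and their
ℤ-span is a direct summand. -/
def IsUnimodular {n m : ℕ} (v : Fin m → Fin n → ℤ) : Prop :=
  LinearIndependent ℤ v ∧
    ∃ C : Submodule ℤ (Fin n → ℤ), IsCompl (Submodule.span ℤ (Set.range v)) C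

/-- A primitive vector. -/
def Primitive {n : ℕ} (v : Fin n → ℤ) : Prop := IsUnimodular ![v]

/-- The entries of `w` are pairwise `ω`-orthogonal. -/
def PairwiseOrth {g m : ℕ} (w : Fin m → Fin (2 * g) → ℤ) : Prop :=
  ∀ i j, i ≠ j → symp (w i) (w j) = 0

/-- `Λ³ W`: the span of all wedges of three vectors from `W` inside the
exterior algebra. -/
def wedge3 {g : ℕ} (W : Submodule ℚ (Fin (2 * g) → ℚ)) :
    Submodule ℚ (ExteriorAlgebra ℚ (Fin (2 * g) → ℚ)) :=
  Submodule.span ℚ {x | ∃ z₁ ∈ W, ∃ z₂ ∈ W, ∃ z₃ ∈ W,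
    x = ExteriorAlgebra.ι ℚ z₁ * ExteriorAlgebra.ι ℚ z₂ * ExteriorAlgebra.ι ℚ z₃}

/-- `u ∧ Λ² W`. -/
def uWedge2 {g : ℕ} (u : Fin (2 * g) → ℚ) (W : Submodule ℚ (Fin (2 * g) → ℚ)) :
    Submodule ℚ (ExteriorAlgebra ℚ (Fin (2 * g) → ℚ)) :=
  Submodule.span ℚ {x | ∃ z₁ ∈ W, ∃ z₂ ∈ W,
    x = ExteriorAlgebra.ι ℚ u * ExteriorAlgebra.ι ℚ z₁ * ExteriorAlgebra.ι ℚ z₂}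

/-- `u ∧ u' ∧ W`. -/
def uuWedge1 {g : ℕ} (u u' : Fin (2 * g) → ℚ) (W : Submodule ℚ (Fin (2 * g) → ℚ)) :
    Submodule ℚ (ExteriorAlgebra ℚ (Fin (2 * g) → ℚ)) :=
  Submodule.span ℚ {x | ∃ z ∈ W,
    x = ExteriorAlgebra.ι ℚ u * ExteriorAlgebra.ι ℚ u' * ExteriorAlgebra.ι ℚ z}

/-- The simplicial differential: on the summand indexed by `w` it sends `z` to
`Σ_j (-1)^j · z` placed in the summand indexed by `∂_j w`. -/
noncomputable def diff (g p : ℕ)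
    (ξ : (Fin (p + 1) → Fin (2 * g) → ℤ) →₀ ExteriorAlgebra ℚ (Fin (2 * g) → ℚ)) :
    (Fin p → Fin (2 * g) → ℤ) →₀ ExteriorAlgebra ℚ (Fin (2 * g) → ℚ) :=
  ξ.sum fun w z =>
    ∑ j : Fin (p + 1), ((-1 : ℚ) ^ (j : ℕ)) • Finsupp.single (fun i => w (j.succAbove i)) z

/-- The gcd of the determinants of all maximal square submatrices of the matrix
whose columns are the `v i`. -/
def vgcd {ι : Type*} [Fintype ι] {m : ℕ} (v : Fin m → ι → ℤ) : ℕ :=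
  Finset.univ.gcd fun r : Fin m → ι => (Matrix.det (Matrix.of fun i j => v j (r i))).natAbs

-- ############ aux start
section Aux
variable {g : ℕ}

abbrev Hg (g : ℕ) := Fin (2 * g) → ℤ

theorem symp_antisymm (x y : Hg g) : symp x y = - symp y x := by
  unfold symp
  rw [← Finset.sum_neg_distrib]
  exact Finset.sum_congr rfl fun i _ => by ring

theorem symp_self (x : Hg g) : symp x x = 0 := by
  unfold symp; exact Finset.sum_eq_zero fun i _ => by ring

theorem symp_add_right (a x y : Hg g) : symp a (x + y) = symp a x + symp a y := by
  rw [symp_antisymm, symp_add_left, symp_antisymm x a, symp_antisymm y a]; ring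

theorem symp_smul_right (c : ℤ) (a x : Hg g) : symp a (c • x) = c * symp a x := by
  rw [symp_antisymm, symp_smul_left, symp_antisymm x a]; ring

theorem symp_sub_left (x y a : Hg g) : symp (x - y) a = symp x a - symp y a := by
  have := symp_add_left (x - y) y a; simp at this; linarith

theorem symp_sub_right (a x y : Hg g) : symp a (x - y) = symp a x - symp a y := by
  rw [symp_antisymm, symp_sub_left, symp_antisymm x a, symp_antisymm y a]; ring

/-- vector supported on coordinates 0,1 -/
def pv (g : ℕ) (x y : ℤ) : Hg g := fun k => if k.1 = 0 then x else if k.1 = 1 then y else 0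

/-- vector supported on coordinates 2,3 -/
def pv2 (g : ℕ) (x y : ℤ) : Hg g := fun k => if k.1 = 2 then x else if k.1 = 3 then y else 0

theorem symp_pv_left (hg : 1 ≤ g) (x y : ℤ) (z : Hg g) :
    symp (pv g x y) z = x * z ⟨1, by omega⟩ - y * z ⟨0, by omega⟩ := by
  unfold symp
  rw [Finset.sum_eq_single (⟨0, hg⟩ : Fin g)]
  · simp [pv]
  · intro i _ hne
    have h0 : i.1 ≠ 0 := fun h => hne (Fin.ext h)
    have e1 : 2 * i.1 ≠ 0 := by omega
    have e2 : 2 * i.1 ≠ 1 := by omega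
    have e3 : 2 * i.1 + 1 ≠ 0 := by omega
    have e4 : 2 * i.1 + 1 ≠ 1 := by omega
    simp [pv, e1, e2, e3, e4]
  · intro h; exact absurd (Finset.mem_univ _) h

theorem symp_pv2_left (hg : 2 ≤ g) (x y : ℤ) (z : Hg g) :
    symp (pv2 g x y) z = x * z ⟨3, by omega⟩ - y * z ⟨2, by omega⟩ := by
  unfold symp
  rw [Finset.sum_eq_single (⟨1, hg⟩ : Fin g)]
  · simp [pv2]
  · intro i _ hne
    have h0 : i.1 ≠ 1 := fun h => hne (Fin.ext h)
    have e1 : 2 * i.1 ≠ 2 := by omega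
    have e2 : 2 * i.1 ≠ 3 := by omega
    have e3 : 2 * i.1 + 1 ≠ 2 := by omega
    have e4 : 2 * i.1 + 1 ≠ 3 := by omega
    simp [pv2, e1, e2, e3, e4]
  · intro h; exact absurd (Finset.mem_univ _) h

theorem symp_pv_right (hg : 1 ≤ g) (x y : ℤ) (z : Hg g) :
    symp z (pv g x y) = z ⟨0, by omega⟩ * y - z ⟨1, by omega⟩ * x := by
  rw [symp_antisymm, symp_pv_left hg]; ring

theorem symp_pv2_right (hg : 2 ≤ g) (x y : ℤ) (z : Hg g) :
    symp z (pv2 g x y) = z ⟨2, by omega⟩ * y - z ⟨3, by omega⟩ * x := by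
  rw [symp_antisymm, symp_pv2_left hg]; ring

theorem sum_pair_range (f : ℕ → ℤ) (n : ℕ) :
    ∑ i ∈ Finset.range n, (f (2 * i) + f (2 * i + 1)) = ∑ j ∈ Finset.range (2 * n), f j := by
  induction n with
  | zero => simp
  | succ n ih =>
    rw [Finset.sum_range_succ, ih, (by ring : 2 * (n + 1) = 2 * n + 1 + 1),
      Finset.sum_range_succ, Finset.sum_range_succ]
    ring

/-- the "rotation" making `symp x (J c) = x ⬝ c`. -/
def J (c : Hg g) : Hg g := fun j =>
  if h : j.1 % 2 = 0 then -(c ⟨j.1 + 1, by have := j.isLt; omega⟩)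
  else c ⟨j.1 - 1, by have := j.isLt; omega⟩

theorem symp_J (x c : Hg g) : symp x (J c) = ∑ j, x j * c j := by
  classical
  have key : ∀ j : Fin (2 * g), x j * c j
      = if h : j.1 < 2 * g then x ⟨j.1, h⟩ * c ⟨j.1, h⟩ else 0 := by
    intro j; rw [dif_pos j.isLt]
  unfold symp
  set f : ℕ → ℤ := fun n => if h : n < 2 * g then x ⟨n, h⟩ * c ⟨n, h⟩ else 0 with hf
  have hL : ∀ i : Fin g,
      x ⟨2 * i.1, by omega⟩ * (J c) ⟨2 * i.1 + 1, by omega⟩ -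
        x ⟨2 * i.1 + 1, by omega⟩ * (J c) ⟨2 * i.1, by omega⟩
      = f (2 * i.1) + f (2 * i.1 + 1) := by
    intro i
    have hi := i.isLt
    have h1 : (2 * i.1 + 1) % 2 ≠ 0 := by omega
    have h2 : (2 * i.1) % 2 = 0 := by omega
    have hb1 : 2 * i.1 < 2 * g := by omega
    have hb2 : 2 * i.1 + 1 < 2 * g := by omega
    rw [hf]
    simp only [J, dif_neg h1, dif_pos h2, dif_pos hb1, dif_pos hb2]
    have : (2 * i.1 + 1 - 1) = 2 * i.1 := by omega
    simp only [this]
    ring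
  have hR : ∑ j : Fin (2 * g), x j * c j = ∑ j : Fin (2 * g), f j.1 := by
    refine Finset.sum_congr rfl fun j _ => ?_
    rw [hf]; simp only [dif_pos j.isLt]
  refine (Finset.sum_congr rfl fun i _ => hL i).trans ?_
  rw [hR, Fin.sum_univ_eq_sum_range f, ← sum_pair_range]
  exact Fin.sum_univ_eq_sum_range (fun n => f (2 * n) + f (2 * n + 1)) g

theorem finset_bezout {ι : Type*} [DecidableEq ι] (s : Finset ι) (f : ι → ℤ) :
    ∃ c : ι → ℤ, ∑ j ∈ s, c j * f j = s.gcd f := by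
  classical
  induction s using Finset.induction with
  | empty => exact ⟨0, by simp⟩
  | @insert a s ha ih =>
    obtain ⟨c, hc⟩ := ih
    rw [Finset.gcd_insert]
    have hgcd : (gcd (f a) (s.gcd f) : ℤ)
        = f a * Int.gcdA (f a) (s.gcd f) + (s.gcd f) * Int.gcdB (f a) (s.gcd f) := by
      rw [← Int.gcd_eq_gcd_ab]
      rfl
    refine ⟨fun j => if j = a then Int.gcdA (f a) (s.gcd f) else Int.gcdB (f a) (s.gcd f) * c j, ?_⟩
    rw [Finset.sum_insert ha]
    dsimp only
    rw [if_pos rfl]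
    have : ∀ j ∈ s, (if j = a then Int.gcdA (f a) (s.gcd f) else Int.gcdB (f a) (s.gcd f) * c j) * f j
        = Int.gcdB (f a) (s.gcd f) * (c j * f j) := by
      intro j hj
      rw [if_neg (by rintro rfl; exact ha hj)]
      ring
    rw [Finset.sum_congr rfl this, ← Finset.mul_sum, hc, hgcd]
    ring

end Aux

section Aux2
variable {g : ℕ}

def SPrim (v : Hg g) : Prop := ∃ p, symp v p = 1

def SEdge (v w : Hg g) : Prop :=
  symp v w = 0 ∧ ∃ p q, symp v p = 1 ∧ symp w p = 0 ∧ symp v q = 0 ∧ symp w q = 1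

def sympL (p : Hg g) : Hg g →ₗ[ℤ] ℤ where
  toFun x := symp x p
  map_add' x y := symp_add_left x y p
  map_smul' c x := by simpa using symp_smul_left c x p

theorem sympL_apply (p x : Hg g) : sympL p x = symp x p := rfl

theorem range_one (v : Hg g) : Set.range ![v] = {v} := by
  simp [Matrix.range_cons, Matrix.range_empty]

theorem range_two (v w : Hg g) : Set.range ![v, w] = {v, w} := by
  simp only [Matrix.range_cons, Matrix.range_empty, Set.union_empty, Set.singleton_union,
    Set.insert_comm]

theorem sprim_primitive {v : Hg g} (h : SPrim v) : Primitive v := by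
  obtain ⟨p, hp⟩ := h
  have hv0 : v ≠ 0 := by rintro rfl; rw [symp_zero_left] at hp; exact zero_ne_one hp
  constructor
  · rw [linearIndependent_unique_iff]
    simp only [Fin.default_eq_zero, Matrix.cons_val_zero]
    exact hv0
  · refine ⟨LinearMap.ker (sympL p), ?_⟩
    rw [range_one]
    constructor
    · rw [Submodule.disjoint_def]
      intro x hx hk
      obtain ⟨a, rfl⟩ := Submodule.mem_span_singleton.mp hx
      have h2 : symp (a • v) p = 0 := LinearMap.mem_ker.mp hk
      rw [symp_smul_left, hp, mul_one] at h2
      rw [h2, zero_smul]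
    · rw [codisjoint_iff, eq_top_iff]
      intro x _
      refine Submodule.mem_sup.mpr ⟨symp x p • v, Submodule.mem_span_singleton.mpr ⟨_, rfl⟩,
        x - symp x p • v, LinearMap.mem_ker.mpr ?_, by abel⟩
      rw [sympL_apply, symp_sub_left, symp_smul_left, hp]; ring

theorem sedge_symm {v w : Hg g} (h : SEdge v w) : SEdge w v := by
  obtain ⟨h0, p, q, h1, h2, h3, h4⟩ := h
  exact ⟨by rw [symp_antisymm, h0, neg_zero], q, p, h4, h3, h2, h1⟩

theorem sedge_ne {v w : Hg g} (h : SEdge v w) : v ≠ w := by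
  obtain ⟨h0, p, q, h1, h2, h3, h4⟩ := h
  rintro rfl; rw [h1] at h2; exact one_ne_zero h2 -- check

theorem sedge_sprim_right {v w : Hg g} (h : SEdge v w) : SPrim w := by
  obtain ⟨h0, p, q, h1, h2, h3, h4⟩ := h; exact ⟨q, h4⟩

theorem sedge_unimodular {v w : Hg g} (h : SEdge v w) : IsUnimodular ![v, w] := by
  obtain ⟨h0, p, q, h1, h2, h3, h4⟩ := h
  constructor
  · rw [LinearIndependent.pair_iff]
    intro s t hst
    have hp : symp (s • v + t • w) p = 0 := by rw [hst, symp_zero_left]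
    have hq : symp (s • v + t • w) q = 0 := by rw [hst, symp_zero_left]
    rw [symp_add_left, symp_smul_left, symp_smul_left, h1, h2] at hp
    rw [symp_add_left, symp_smul_left, symp_smul_left, h3, h4] at hq
    exact ⟨by linarith, by linarith⟩
  · refine ⟨LinearMap.ker (sympL p) ⊓ LinearMap.ker (sympL q), ?_⟩
    rw [range_two]
    constructor
    · rw [Submodule.disjoint_def]
      intro x hx hk
      obtain ⟨a, b, rfl⟩ := Submodule.mem_span_pair.mp hx
      obtain ⟨hkp, hkq⟩ := Submodule.mem_inf.mp hk
      have hP : symp (a • v + b • w) p = 0 := LinearMap.mem_ker.mp hkp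
      have hQ : symp (a • v + b • w) q = 0 := LinearMap.mem_ker.mp hkq
      rw [symp_add_left, symp_smul_left, symp_smul_left, h1, h2] at hP
      rw [symp_add_left, symp_smul_left, symp_smul_left, h3, h4] at hQ
      have ha : a = 0 := by linarith
      have hb : b = 0 := by linarith
      rw [ha, hb, zero_smul, zero_smul, add_zero]
    · rw [codisjoint_iff, eq_top_iff]
      intro x _
      refine Submodule.mem_sup.mpr ⟨symp x p • v + symp x q • w,
        Submodule.mem_span_pair.mpr ⟨_, _, rfl⟩,
        x - (symp x p • v + symp x q • w),
        Submodule.mem_inf.mpr ⟨LinearMap.mem_ker.mpr ?_, LinearMap.mem_ker.mpr ?_⟩, by abel⟩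
      · rw [sympL_apply, symp_sub_left, symp_add_left, symp_smul_left, symp_smul_left, h1, h2]
        ring
      · rw [sympL_apply, symp_sub_left, symp_add_left, symp_smul_left, symp_smul_left, h3, h4]
        ring

theorem primitive_sprim {v : Hg g} (h : Primitive v) : SPrim v := by
  classical
  obtain ⟨hli, C, hC⟩ := h
  have hv0 : v ≠ 0 := by simpa using hli.ne_zero 0
  rw [range_one] at hC
  set P := Submodule.span ℤ ({v} : Set (Hg g)) with hP
  set π : Hg g →ₗ[ℤ] Hg g := P.subtype ∘ₗ P.projectionOnto C hC with hπ
  have hvP : v ∈ P := Submodule.mem_span_singleton_self v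
  have hπv : π v = v := by
    show P.subtype (P.projectionOnto C hC ((⟨v, hvP⟩ : P) : Hg g)) = v
    rw [Submodule.projectionOnto_apply_left hC]
    rfl
  have hmem : ∀ j : Fin (2 * g), ∃ a : ℤ, a • v = π (fun k => if j = k then (1:ℤ) else 0) :=
    fun j => Submodule.mem_span_singleton.mp
      (SetLike.coe_mem (P.projectionOnto C hC (fun k => if j = k then (1:ℤ) else 0)))
  choose coef hcoef using hmem
  have hsum : v = ∑ j, v j • (fun k => if j = k then (1:ℤ) else 0) := pi_eq_sum_univ v
  have hv2 : π v = (∑ j, v j * coef j) • v := by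
    conv_lhs => rw [hsum, map_sum]
    rw [Finset.sum_smul]
    refine Finset.sum_congr rfl fun j _ => ?_
    rw [map_smul, ← hcoef j, smul_smul]
  have hone : (∑ j, v j * coef j) = 1 := by
    have := hv2.symm.trans hπv
    have h1 : (∑ j, v j * coef j) • v = (1 : ℤ) • v := by rw [this, one_smul]
    exact smul_left_injective ℤ hv0 h1
  exact ⟨J coef, by rw [symp_J, hone]⟩

end Aux2

section Aux3
variable {g : ℕ}

theorem symp_comb (r' s₀ z : Hg g) (a b : ℤ) :
    symp (a • r' + b • s₀) z = a * symp r' z + b * symp s₀ z := by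
  rw [symp_add_left, symp_smul_left, symp_smul_left]

theorem symp_comb_right (z r' s₀ : Hg g) (a b : ℤ) :
    symp z (a • r' + b • s₀) = a * symp z r' + b * symp z s₀ := by
  rw [symp_add_right, symp_smul_right, symp_smul_right]

theorem farey_edge {r' s₀ p q : Hg g} (h1 : symp r' s₀ = 0)
    (hp1 : symp r' p = 1) (hp0 : symp s₀ p = 0) (hq0 : symp r' q = 0) (hq1 : symp s₀ q = 1)
    (x y x' y' : ℤ) (hdet : x * y' - y * x' = 1 ∨ x * y' - y * x' = -1) :
    SEdge (x • r' + y • s₀) (x' • r' + y' • s₀) := by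
  set D := x * y' - y * x' with hD
  have hD2 : D * D = 1 := by rcases hdet with h | h <;> rw [h] <;> ring
  have hzp : symp (x • r' + y • s₀) p = x := by rw [symp_comb, hp1, hp0]; ring
  have hzq : symp (x • r' + y • s₀) q = y := by rw [symp_comb, hq0, hq1]; ring
  have hzp' : symp (x' • r' + y' • s₀) p = x' := by rw [symp_comb, hp1, hp0]; ring
  have hzq' : symp (x' • r' + y' • s₀) q = y' := by rw [symp_comb, hq0, hq1]; ring
  refine ⟨?_, (D * y') • p + (-(D * x')) • q, (-(D * y)) • p + (D * x) • q, ?_, ?_, ?_, ?_⟩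
  · rw [symp_comb]
    have e1 : symp r' (x' • r' + y' • s₀) = 0 := by
      rw [symp_comb_right, symp_self, h1]; ring
    have e2 : symp s₀ (x' • r' + y' • s₀) = 0 := by
      rw [symp_comb_right, symp_self, symp_antisymm s₀ r', h1]; ring
    rw [e1, e2]; ring
  · rw [symp_comb_right, hzp, hzq]; linear_combination hD2
  · rw [symp_comb_right, hzp', hzq']; ring
  · rw [symp_comb_right, hzp, hzq]; ring
  · rw [symp_comb_right, hzp', hzq']; linear_combination hD2

theorem farey {r' s₀ p q : Hg g} (h1 : symp r' s₀ = 0)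
    (hp1 : symp r' p = 1) (hp0 : symp s₀ p = 0) (hq0 : symp r' q = 0) (hq1 : symp s₀ q = 1) :
    ∀ n : ℕ, ∀ d m : ℤ, d.natAbs + m.natAbs ≤ n → IsCoprime d m →
      Relation.ReflTransGen SEdge (d • r' + m • s₀) s₀ := by
  intro n
  induction n with
  | zero =>
    intro d m hn hco
    have hd : d = 0 := by omega
    have hm : m = 0 := by omega
    rw [hd, hm] at hco
    rcases Int.isUnit_iff.mp (isCoprime_zero_right.mp hco) with h | h <;>
      exact absurd h (by norm_num)
  | succ n ih =>
    intro d m hn hco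
    by_cases hm : m = 0
    · subst hm
      rcases Int.isUnit_iff.mp (isCoprime_zero_right.mp hco) with h | h <;> subst h
      · have e := farey_edge h1 hp1 hp0 hq0 hq1 1 0 0 1 (Or.inl (by ring))
        simpa using Relation.ReflTransGen.single e
      · have e := farey_edge h1 hp1 hp0 hq0 hq1 (-1) 0 0 1 (Or.inr (by ring))
        simpa using Relation.ReflTransGen.single e
    · by_cases hd : d = 0
      · subst hd
        have hmu : IsUnit m := by
          rcases hco with ⟨u, w, huw⟩
          exact IsUnit.of_mul_eq_one w (by linarith)
        rcases Int.isUnit_iff.mp hmu with h | h <;> subst h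
        · simpa using (Relation.ReflTransGen.refl :
            Relation.ReflTransGen SEdge s₀ s₀)
        · have e1 := farey_edge h1 hp1 hp0 hq0 hq1 0 (-1) 1 0 (Or.inl (by ring))
          have e2 := farey_edge h1 hp1 hp0 hq0 hq1 1 0 0 1 (Or.inl (by ring))
          simpa using (Relation.ReflTransGen.single e1).tail e2
      · by_cases hm1 : m.natAbs = 1
        · have hmor : m = 1 ∨ m = -1 := by omega
          have hmm : m * m = 1 := by rcases hmor with h | h <;> rw [h] <;> ring
          have e1 := farey_edge h1 hp1 hp0 hq0 hq1 d m (-m) 0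
            (Or.inl (by linear_combination hmm))
          have e2 := farey_edge h1 hp1 hp0 hq0 hq1 (-m) 0 0 1 (by
            rcases hmor with h | h <;> rw [h]
            · exact Or.inr (by ring)
            · exact Or.inl (by ring))
          simpa using (Relation.ReflTransGen.single e1).tail e2
        · -- general Euclidean step: |m| ≥ 2, d ≠ 0
          obtain ⟨u, w, huw⟩ := hco
          set μ : ℤ := (m.natAbs : ℤ) with hμdef
          have hμpos : 0 < μ := by omega
          set b := u % μ with hbdef
          have hb0 : 0 ≤ b := Int.emod_nonneg u (by omega)
          have hblt : b < μ := Int.emod_lt_of_pos u hμpos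
          have hemod : b = u - μ * (u / μ) := by rw [hbdef, Int.emod_def]
          have hμm : ∃ t : ℤ, μ = m * t := by
            rcases Int.natAbs_eq m with h | h
            · exact ⟨1, by omega⟩
            · exact ⟨-1, by omega⟩
          obtain ⟨t, ht⟩ := hμm
          have hdvd : m ∣ d * b - 1 :=
            ⟨-w - d * t * (u / μ), by rw [hemod, ht]; linear_combination huw⟩
          obtain ⟨a, ha⟩ := hdvd
          have hdet : d * b - m * a = 1 := by linarith
          have hbne : b ≠ 0 := by
            intro hbz
            rw [hbz] at ha
            have h1' : m * a = -1 := by linarith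
            have h2' : m.natAbs * a.natAbs = 1 := by
              have := congrArg Int.natAbs h1'
              rwa [Int.natAbs_mul] at this
            exact hm1 (Nat.eq_one_of_mul_eq_one_right h2')
          have habs1 : (d * b - 1).natAbs = m.natAbs * a.natAbs := by
            rw [ha, Int.natAbs_mul]
          have habs2 : (d * b - 1).natAbs ≤ (d * b).natAbs + 1 := by
            have := Int.natAbs_sub_le (d * b) 1
            simpa using this
          have habs3 : (d * b).natAbs = d.natAbs * b.natAbs := Int.natAbs_mul d b
          have key : m.natAbs * a.natAbs ≤ d.natAbs * b.natAbs + 1 := by omega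
          have hbound : a.natAbs ≤ d.natAbs := by
            by_contra hA
            push_neg at hA
            have k1 : m.natAbs * a.natAbs ≥ m.natAbs * d.natAbs + m.natAbs := by
              have h := Nat.mul_le_mul_left m.natAbs (show d.natAbs + 1 ≤ a.natAbs by omega)
              rwa [Nat.mul_add, Nat.mul_one] at h
            have k2 : d.natAbs * (b.natAbs + 1) ≤ d.natAbs * m.natAbs :=
              Nat.mul_le_mul_left d.natAbs (by omega)
            have k2' : d.natAbs * b.natAbs + d.natAbs ≤ d.natAbs * m.natAbs := by
              rwa [Nat.mul_add, Nat.mul_one] at k2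
            have hcomm : m.natAbs * d.natAbs = d.natAbs * m.natAbs := Nat.mul_comm _ _
            omega
          have hco' : IsCoprime a b := ⟨-m, d, by linarith⟩
          have hn' : a.natAbs + b.natAbs ≤ n := by omega
          have e := farey_edge h1 hp1 hp0 hq0 hq1 d m a b (Or.inl hdet)
          exact Relation.ReflTransGen.head e (ih a b hn' hco')

/-- the final edge from a vector supported away from the first hyperbolic pair to `a₁`. -/
theorem sedge_to_e0 (hg1 : 1 ≤ g) {s₀ q : Hg g} (h00 : s₀ ⟨0, by omega⟩ = 0)
    (h01 : s₀ ⟨1, by omega⟩ = 0) (hq1 : symp s₀ q = 1) :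
    SEdge s₀ (pv g 1 0) := by
  have he01 : symp (pv g 1 0) (pv g 0 1) = 1 := by
    rw [symp_pv_left hg1]; simp [pv]
  have h0 : symp s₀ (pv g 1 0) = 0 := by
    rw [symp_pv_right hg1, h00, h01]; ring
  have hs1 : symp s₀ (pv g 0 1) = 0 := by
    rw [symp_pv_right hg1, h00, h01]; ring
  refine ⟨h0, q - symp (pv g 1 0) q • pv g 0 1, pv g 0 1, ?_, ?_, hs1, he01⟩
  · rw [symp_sub_right, symp_smul_right, hq1, hs1]; ring
  · rw [symp_sub_right, symp_smul_right, he01]; ring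

theorem reach_e0 (hg : 2 ≤ g) {v : Hg g} (hv : SPrim v) :
    Relation.ReflTransGen SEdge v (pv g 1 0) := by
  classical
  have hg1 : 1 ≤ g := by omega
  obtain ⟨pw, hpw⟩ := hv
  set i0 : Fin (2 * g) := ⟨0, by omega⟩ with hi0
  set i1 : Fin (2 * g) := ⟨1, by omega⟩ with hi1
  set s : Hg g := fun k => if k.1 < 2 then 0 else v k with hsdef
  by_cases hs0 : s = 0
  · -- v is supported on the first pair
    have hv_eq : v = pv g (v i0) (v i1) := by
      funext k
      by_cases h0 : k.1 = 0
      · have : k = i0 := Fin.ext h0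
        rw [this]; simp [pv, hi0]
      · by_cases h1 : k.1 = 1
        · have : k = i1 := Fin.ext h1
          rw [this]; simp [pv, hi1]
        · have hk2 : ¬ k.1 < 2 := by omega
          have := congrFun hs0 k
          simp only [hsdef, Pi.zero_apply, if_neg hk2] at this
          simp [pv, h0, h1, this]
    have hcop : v i0 * pw i1 - v i1 * pw i0 = 1 := by
      have := hpw
      rw [hv_eq, symp_pv_left hg1] at this
      exact this
    -- r' = v, s₀ = e₂, p, q
    have h1 : symp v (pv2 g 1 0) = 0 := by
      rw [hv_eq, symp_pv_left hg1]; simp [pv2]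
    have hp1 : symp v (pv g (pw i0) (pw i1)) = 1 := by
      rw [hv_eq, symp_pv_left hg1]; simp only [pv]
      simpa using hcop
    have hp0 : symp (pv2 g 1 0) (pv g (pw i0) (pw i1)) = 0 := by
      rw [symp_pv2_left hg]; simp [pv]
    have hq0 : symp v (pv2 g 0 1) = 0 := by
      rw [hv_eq, symp_pv_left hg1]; simp [pv2]
    have hq1 : symp (pv2 g 1 0) (pv2 g 0 1) = 1 := by
      rw [symp_pv2_left hg]; simp [pv2]
    have hpath := farey h1 hp1 hp0 hq0 hq1 1 1 0 (by norm_num) isCoprime_one_left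
    have hpath' : Relation.ReflTransGen SEdge v (pv2 g 1 0) := by simpa using hpath
    refine hpath'.tail (sedge_to_e0 hg1 ?_ ?_ hq1)
    · simp [pv2]
    · simp [pv2]
  · -- the tail of v is nonzero
    set m₀ : ℤ := Finset.univ.gcd s with hm₀def
    have hm₀ : m₀ ≠ 0 := by
      intro h
      apply hs0
      funext k
      have := Finset.gcd_eq_zero_iff.mp (hm₀def ▸ h) k (Finset.mem_univ k)
      simpa using this
    set s₀ : Hg g := fun k => s k / m₀ with hs₀def
    have hdvd : ∀ k, m₀ ∣ s k := fun k => Finset.gcd_dvd (Finset.mem_univ k)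
    have hss : ∀ k, s k = m₀ * s₀ k := fun k => (Int.mul_ediv_cancel' (hdvd k)).symm
    have hs00 : s₀ i0 = 0 := by
      have : s i0 = 0 := by simp [hsdef, hi0]
      simp [hs₀def, this]
    have hs01 : s₀ i1 = 0 := by
      have : s i1 = 0 := by simp [hsdef, hi1]
      simp [hs₀def, this]
    -- bezout for s₀
    obtain ⟨c, hc⟩ := finset_bezout Finset.univ s
    have hc₀ : ∑ j, c j * s₀ j = 1 := by
      apply mul_left_cancel₀ hm₀
      rw [mul_one, Finset.mul_sum]
      have hcongr : ∀ j ∈ Finset.univ, m₀ * (c j * s₀ j) = c j * s j :=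
        fun j _ => by rw [hss j]; ring
      calc ∑ j, m₀ * (c j * s₀ j) = ∑ j, c j * s j := Finset.sum_congr rfl hcongr
        _ = m₀ := by rw [hc]
    have hq₀ : symp s₀ (J c) = 1 := by
      rw [symp_J]
      rw [← hc₀]
      exact Finset.sum_congr rfl fun j _ => mul_comm _ _
    by_cases hab : v i0 = 0 ∧ v i1 = 0
    · -- v = m₀ • s₀
      have hv_eq : v = m₀ • s₀ := by
        funext k
        by_cases h0 : k.1 = 0
        · have : k = i0 := Fin.ext h0
          rw [this]; simp [hab.1, hs00]
        · by_cases h1 : k.1 = 1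
          · have : k = i1 := Fin.ext h1
            rw [this]; simp [hab.2, hs01]
          · have hk2 : ¬ k.1 < 2 := by omega
            have hsk : s k = v k := by simp only [hsdef]; exact if_neg hk2
            have := hss k
            rw [hsk] at this
            simpa using this
      have h1 : symp (pv g 1 0) s₀ = 0 := by
        rw [symp_pv_left hg1, hs01, hs00]; ring
      have hp1 : symp (pv g 1 0) (pv g 0 1) = 1 := by
        rw [symp_pv_left hg1]; simp [pv]
      have hp0 : symp s₀ (pv g 0 1) = 0 := by
        rw [symp_pv_right hg1, hs00, hs01]; ring
      set tq : ℤ := symp (pv g 1 0) (J c) with htq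
      have hq0 : symp (pv g 1 0) (J c - tq • pv g 0 1) = 0 := by
        rw [symp_sub_right, symp_smul_right, hp1, ← htq]; ring
      have hq1 : symp s₀ (J c - tq • pv g 0 1) = 1 := by
        rw [symp_sub_right, symp_smul_right, hq₀, hp0]; ring
      have hcop : IsCoprime (0 : ℤ) m₀ := by
        refine ⟨0, symp s₀ pw, ?_⟩
        have := hpw
        rw [hv_eq, symp_smul_left] at this
        linarith
      have hpath := farey h1 hp1 hp0 hq0 hq1 ((0:ℤ).natAbs + m₀.natAbs) 0 m₀ le_rfl hcop
      have hpath' : Relation.ReflTransGen SEdge v s₀ := by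
        rw [hv_eq]
        simpa using hpath
      refine hpath'.tail (sedge_to_e0 hg1 ?_ ?_ hq1)
      · exact hs00
      · exact hs01
    · -- general case
      set a : ℤ := v i0 with ha
      set b : ℤ := v i1 with hb
      set d : ℤ := (Int.gcd a b : ℤ) with hd
      have hd0 : d ≠ 0 := by
        intro h
        have := Int.gcd_eq_zero_iff.mp (by omega : Int.gcd a b = 0)
        exact hab ⟨this.1, this.2⟩
      have hda : d ∣ a := Int.gcd_dvd_left a b
      have hdb : d ∣ b := Int.gcd_dvd_right a b
      set r' : Hg g := pv g (a / d) (b / d) with hr'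
      have hv_dec : v = d • r' + m₀ • s₀ := by
        funext k
        by_cases h0 : k.1 = 0
        · have hk : k = i0 := Fin.ext h0
          rw [hk]
          have e1 : r' i0 = a / d := by simp [hr', pv, hi0]
          simp only [Pi.add_apply, Pi.smul_apply, smul_eq_mul, e1, hs00, mul_zero, add_zero]
          rw [Int.mul_ediv_cancel' hda]
        · by_cases h1 : k.1 = 1
          · have hk : k = i1 := Fin.ext h1
            rw [hk]
            have e1 : r' i1 = b / d := by simp [hr', pv, hi1]
            simp only [Pi.add_apply, Pi.smul_apply, smul_eq_mul, e1, hs01, mul_zero, add_zero]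
            rw [Int.mul_ediv_cancel' hdb]
          · have hk2 : ¬ k.1 < 2 := by omega
            have e1 : r' k = 0 := by simp [hr', pv, h0, h1]
            have hsk : s k = v k := by simp only [hsdef]; exact if_neg hk2
            have e2 := hss k
            rw [hsk] at e2
            simp only [Pi.add_apply, Pi.smul_apply, smul_eq_mul, e1, mul_zero, zero_add]
            exact e2
      have hgcd_pos : 0 < Int.gcd a b := by
        rcases Nat.eq_zero_or_pos (Int.gcd a b) with h | h
        · exact absurd (by omega : d = 0) hd0
        · exact h
      have hcop' : IsCoprime (a / d) (b / d) :=
        Int.isCoprime_iff_gcd_eq_one.mpr (Int.gcd_div_gcd_div_gcd hgcd_pos)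
      obtain ⟨x, y, hxy⟩ := hcop'
      -- p := pv g (-y) x
      have hp1 : symp r' (pv g (-y) x) = 1 := by
        rw [hr', symp_pv_left hg1]
        simp only [pv]
        norm_num
        linarith
      have hp0 : symp s₀ (pv g (-y) x) = 0 := by
        rw [symp_pv_right hg1, hs00, hs01]; ring
      have h1 : symp r' s₀ = 0 := by
        rw [hr', symp_pv_left hg1, hs00, hs01]; ring
      set tq : ℤ := symp r' (J c) with htq
      have hq0 : symp r' (J c - tq • pv g (-y) x) = 0 := by
        rw [symp_sub_right, symp_smul_right, hp1, ← htq]; ring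
      have hq1 : symp s₀ (J c - tq • pv g (-y) x) = 1 := by
        rw [symp_sub_right, symp_smul_right, hq₀, hp0]; ring
      have hcop : IsCoprime d m₀ := by
        refine ⟨symp r' pw, symp s₀ pw, ?_⟩
        have := hpw
        rw [hv_dec, symp_comb] at this
        linarith
      have hpath := farey h1 hp1 hp0 hq0 hq1 (d.natAbs + m₀.natAbs) d m₀ le_rfl hcop
      have hpath' : Relation.ReflTransGen SEdge v s₀ := by
        rw [hv_dec]
        exact hpath
      refine hpath'.tail (sedge_to_e0 hg1 ?_ ?_ hq1)
      · exact hs00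
      · exact hs01

theorem rtg_path {v w : Hg g} (hv : Primitive v) (h : Relation.ReflTransGen SEdge v w) :
    ∃ (N : ℕ) (c : Fin (N + 1) → Hg g), c 0 = v ∧ c (Fin.last N) = w ∧
      (∀ i, Primitive (c i)) ∧
      ∀ i : Fin N, c i.castSucc ≠ c i.succ ∧ symp (c i.castSucc) (c i.succ) = 0 ∧
        IsUnimodular ![c i.castSucc, c i.succ] := by
  induction h with
  | refl => exact ⟨0, fun _ => v, rfl, rfl, fun _ => hv, fun i => i.elim0⟩
  | @tail b w hb he ih =>
    obtain ⟨N, c, h0, hlast, hprim, hedge⟩ := ih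
    refine ⟨N + 1, fun j => if h : j.1 < N + 1 then c ⟨j.1, h⟩ else w, ?_, ?_, ?_, ?_⟩
    · have h01 : ((0 : Fin (N + 2)) : ℕ) < N + 1 := by simp
      dsimp only
      rw [dif_pos h01]
      have he0 : (⟨((0 : Fin (N + 2)) : ℕ), h01⟩ : Fin (N + 1)) = 0 := by
        apply Fin.ext; simp
      rw [he0]
      exact h0
    · have hnl : ¬ ((Fin.last (N + 1) : Fin (N + 2)) : ℕ) < N + 1 := by simp
      dsimp only
      rw [dif_neg hnl]
    · intro i
      dsimp only
      by_cases hi : i.1 < N + 1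
      · rw [dif_pos hi]; exact hprim _
      · rw [dif_neg hi]; exact sprim_primitive (sedge_sprim_right he)
    · intro i
      dsimp only
      by_cases hi : i.1 < N
      · have e1 : (i.castSucc.1) < N + 1 := by simp [Fin.coe_castSucc]; omega
        have e2 : (i.succ.1) < N + 1 := by simp only [Fin.val_succ]; omega
        rw [dif_pos e1, dif_pos e2]
        have ec : (⟨i.castSucc.1, e1⟩ : Fin (N + 1)) = (⟨i.1, hi⟩ : Fin N).castSucc := by
          apply Fin.ext; simp [Fin.coe_castSucc]
        have es : (⟨i.succ.1, e2⟩ : Fin (N + 1)) = (⟨i.1, hi⟩ : Fin N).succ := by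
          apply Fin.ext; simp [Fin.val_succ]
        rw [ec, es]
        exact hedge _
      · have hiN : i.1 = N := by have := i.isLt; omega
        have e1 : (i.castSucc.1) < N + 1 := by simp [Fin.coe_castSucc]; omega
        have e2 : ¬ (i.succ.1 < N + 1) := by simp only [Fin.val_succ]; omega
        rw [dif_pos e1, dif_neg e2]
        have efin : (⟨i.castSucc.1, e1⟩ : Fin (N + 1)) = Fin.last N := by
          apply Fin.ext
          simp [Fin.coe_castSucc, Fin.val_last, hiN]
        have hcb : c ⟨i.castSucc.1, e1⟩ = b := by rw [efin, hlast]
        rw [hcb]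
        exact ⟨sedge_ne he, he.1, sedge_unimodular he⟩

end Aux3

/-- the graph on primitive vectors of `ℤ^{2g}` with edges the rank-2
isotropic unimodular pairs is connected. -/
theorem stmt2 (g : ℕ) (hg : 2 ≤ g) (v w : Fin (2 * g) → ℤ)
    (hv : Primitive v) (hw : Primitive w) :
    ∃ (N : ℕ) (c : Fin (N + 1) → Fin (2 * g) → ℤ),
      c 0 = v ∧ c (Fin.last N) = w ∧ (∀ i, Primitive (c i)) ∧
      ∀ i : Fin N, c i.castSucc ≠ c i.succ ∧ symp (c i.castSucc) (c i.succ) = 0 ∧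
        IsUnimodular ![c i.castSucc, c i.succ] := by
  have h1 := reach_e0 hg (primitive_sprim hv)
  have h2 := reach_e0 hg (primitive_sprim hw)
  have hsymm : Symmetric (SEdge (g := g)) := fun a b h => sedge_symm h
  have h3 : Relation.ReflTransGen SEdge v w :=
    h1.trans ((@Relation.ReflTransGen.stdSymm _ SEdge ⟨fun a b h => hsymm h⟩).symm _ _ h2)
  exact rtg_path hv h3

end Paper
end

section
/- Let g ≥ 2. Consider the graph whose vertices are the vectors v ∈ H = ℤ^{2(g+1)} whose a_1-coordinate equals 1 (any such vector is automatically primitive), with an edge between distinct vertices v and w whenever ω(v,w) = 0 and gcd(v,w) = 1 (i.e. v and w span a rank-2 isotropic direct summand of H). Then this graph is connected: any two such vectors are joined by a finite path of such edges. (This is the 0-connectivity part of the theorem that the complex Λ̂(g) of ordered isotropic bases all of whose vectors have a_1-coordinate 1 is (g−2)-connected.) -/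
namespace Paper

lemma range_pair {α : Type*} (x y : α) : Set.range ![x, y] = {x, y} := by
  ext a; simp [Fin.exists_fin_two]; tauto

def coordPair {n : ℕ} (i j : Fin n) : Submodule ℤ (Fin n → ℤ) where
  carrier := {u | u i = 0 ∧ u j = 0}
  add_mem' := fun ha hb => ⟨by simp [ha.1, hb.1], by simp [ha.2, hb.2]⟩
  zero_mem' := ⟨rfl, rfl⟩
  smul_mem' := fun c a ha => ⟨by simp [ha.1], by simp [ha.2]⟩

lemma mem_coordPair {n : ℕ} (i j : Fin n) (u : Fin n → ℤ) :
    u ∈ coordPair i j ↔ u i = 0 ∧ u j = 0 := Iff.rfl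

lemma edge {m : ℕ} (hm : 0 < m) (x y : Fin (2*m) → ℤ) (k : Fin (2*m))
    (hx0 : x ⟨0, by omega⟩ = 1) (hy0 : y ⟨0, by omega⟩ = 1)
    (hk : y k - x k = 1 ∨ y k - x k = -1)
    (hs : symp x y = 0) :
    x ≠ y ∧ symp x y = 0 ∧ IsUnimodular ![x, y] := by
  set i0 : Fin (2*m) := ⟨0, by omega⟩ with hi0
  have hne : x ≠ y := by
    intro h; rw [h, sub_self] at hk; omega
  refine ⟨hne, hs, ?_, coordPair i0 k, ?_, ?_⟩
  · rw [LinearIndependent.pair_iff]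
    intro s t hst
    have h0 := congrFun hst i0
    have hkk := congrFun hst k
    simp only [Pi.add_apply, Pi.smul_apply, smul_eq_mul, Pi.zero_apply, hx0, hy0,
      mul_one] at h0 hkk
    have h2 : t * (y k - x k) = 0 := by linear_combination hkk - x k * h0
    have ht : t = 0 := by rcases hk with h|h <;> rw [h] at h2 <;> omega
    constructor <;> omega
  · rw [Submodule.disjoint_def]
    intro u hu huC
    rw [range_pair, Submodule.mem_span_pair] at hu
    obtain ⟨s, t, rfl⟩ := hu
    rw [mem_coordPair] at huC
    obtain ⟨h0, hkk⟩ := huC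
    simp only [Pi.add_apply, Pi.smul_apply, smul_eq_mul, hx0, hy0, mul_one] at h0 hkk
    have h2 : t * (y k - x k) = 0 := by linear_combination hkk - x k * h0
    have ht : t = 0 := by rcases hk with h|h <;> rw [h] at h2 <;> omega
    have hst : s = 0 := by omega
    rw [ht, hst]; simp
  · rw [codisjoint_iff, Submodule.eq_top_iff']
    intro u
    refine Submodule.mem_sup.2 ⟨(u i0 - (u k - u i0 * x k) * (y k - x k)) • x +
      ((u k - u i0 * x k) * (y k - x k)) • y, ?_,
      u - ((u i0 - (u k - u i0 * x k) * (y k - x k)) • x +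
      ((u k - u i0 * x k) * (y k - x k)) • y), ?_, by abel⟩
    · rw [range_pair]; exact Submodule.mem_span_pair.2 ⟨_, _, rfl⟩
    · rw [mem_coordPair]
      constructor
      · simp only [Pi.sub_apply, Pi.add_apply, Pi.smul_apply, smul_eq_mul, hx0, hy0, mul_one]
        ring
      · simp only [Pi.sub_apply, Pi.add_apply, Pi.smul_apply, smul_eq_mul]
        rcases hk with h|h <;>
          rw [show y k = x k + (y k - x k) from by ring, h] <;> ring

lemma symp_anticomm {m : ℕ} (x y : Fin (2*m) → ℤ) : symp x y = - symp y x := by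
  unfold symp
  rw [← Finset.sum_neg_distrib]
  exact Finset.sum_congr rfl fun i _ => by ring

lemma symp_formula {k : ℕ} (x y : Fin (2*(k+3)) → ℤ)
    (hy : ∀ j : Fin (2*(k+3)), 6 ≤ (j:ℕ) → y j = 0) :
    symp x y = (x ⟨0,by omega⟩ * y ⟨1,by omega⟩ - x ⟨1,by omega⟩ * y ⟨0,by omega⟩)
      + (x ⟨2,by omega⟩ * y ⟨3,by omega⟩ - x ⟨3,by omega⟩ * y ⟨2,by omega⟩)
      + (x ⟨4,by omega⟩ * y ⟨5,by omega⟩ - x ⟨5,by omega⟩ * y ⟨4,by omega⟩) := by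
  unfold symp
  rw [Fin.sum_univ_succ, Fin.sum_univ_succ, Fin.sum_univ_succ]
  rw [Finset.sum_eq_zero (fun i _ => by
    rw [hy _ (by simp [Fin.val_succ]; omega), hy _ (by simp [Fin.val_succ]; omega)]
    ring)]
  simp [Fin.val_succ, Nat.mod_eq_of_lt (show 2 < k + 3 by omega)]
  ring

def cc {k : ℕ} (u : Fin (2*(k+3)) → ℤ) : ℤ :=
  u ⟨1, by omega⟩ - u ⟨2, by omega⟩ * (1 + u ⟨3, by omega⟩)

def S1 {k : ℕ} (u : Fin (2*(k+3)) → ℤ) : Fin (2*(k+3)) → ℤ := fun j =>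
  if (j:ℕ) = 0 then 1 else if (j:ℕ) = 1 then cc u
  else if (j:ℕ) = 3 then u ⟨3, by omega⟩ + 1 else 0

def S2 {k : ℕ} (u : Fin (2*(k+3)) → ℤ) : Fin (2*(k+3)) → ℤ := fun j =>
  if (j:ℕ) = 0 then 1 else if (j:ℕ) = 1 then cc u
  else if (j:ℕ) = 4 then 1 else 0

def S3 {k : ℕ} (u : Fin (2*(k+3)) → ℤ) : Fin (2*(k+3)) → ℤ := fun j =>
  if (j:ℕ) = 0 then 1 else if (j:ℕ) = 3 then 1
  else if (j:ℕ) = 4 then 1 else if (j:ℕ) = 5 then cc u else 0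

def S4 {k : ℕ} (u : Fin (2*(k+3)) → ℤ) : Fin (2*(k+3)) → ℤ := fun j =>
  if (j:ℕ) = 0 then 1 else if (j:ℕ) = 3 then 1 else 0

def E0 {k : ℕ} : Fin (2*(k+3)) → ℤ := fun j => if (j:ℕ) = 0 then 1 else 0

lemma S1_supp {k : ℕ} (u : Fin (2*(k+3)) → ℤ) :
    ∀ j : Fin (2*(k+3)), 6 ≤ (j:ℕ) → S1 u j = 0 := fun j hj => by
  simp only [S1]; rw [if_neg (by omega), if_neg (by omega), if_neg (by omega)]

lemma S2_supp {k : ℕ} (u : Fin (2*(k+3)) → ℤ) :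
    ∀ j : Fin (2*(k+3)), 6 ≤ (j:ℕ) → S2 u j = 0 := fun j hj => by
  simp only [S2]; rw [if_neg (by omega), if_neg (by omega), if_neg (by omega)]

lemma S3_supp {k : ℕ} (u : Fin (2*(k+3)) → ℤ) :
    ∀ j : Fin (2*(k+3)), 6 ≤ (j:ℕ) → S3 u j = 0 := fun j hj => by
  simp only [S3]
  rw [if_neg (by omega), if_neg (by omega), if_neg (by omega), if_neg (by omega)]

lemma S4_supp {k : ℕ} (u : Fin (2*(k+3)) → ℤ) :
    ∀ j : Fin (2*(k+3)), 6 ≤ (j:ℕ) → S4 u j = 0 := fun j hj => by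
  simp only [S4]; rw [if_neg (by omega), if_neg (by omega)]

lemma E0_supp {k : ℕ} :
    ∀ j : Fin (2*(k+3)), 6 ≤ (j:ℕ) → (E0 : Fin (2*(k+3)) → ℤ) j = 0 := fun j hj => by
  simp only [E0]; rw [if_neg (by omega)]

def path {k : ℕ} (v w : Fin (2*(k+3)) → ℤ) : Fin 11 → Fin (2*(k+3)) → ℤ :=
  fun i =>
    match i.1 with
    | 0 => v | 1 => S1 v | 2 => S2 v | 3 => S3 v | 4 => S4 v | 5 => E0
    | 6 => S4 w | 7 => S3 w | 8 => S2 w | 9 => S1 w | _ => w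


lemma path_exists {k : ℕ} (v w : Fin (2*(k+3)) → ℤ)
    (hv : v ⟨0, by omega⟩ = 1) (hw : w ⟨0, by omega⟩ = 1) :
    ∃ (N : ℕ) (c : Fin (N + 1) → Fin (2*(k+3)) → ℤ),
      c 0 = v ∧ c (Fin.last N) = w ∧ (∀ i, c i ⟨0, by omega⟩ = 1) ∧
      ∀ i : Fin N, c i.castSucc ≠ c i.succ ∧ symp (c i.castSucc) (c i.succ) = 0 ∧
        IsUnimodular ![c i.castSucc, c i.succ] := by
  refine ⟨10, path v w, rfl, rfl, ?_, ?_⟩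
  · intro ⟨j, hj⟩
    interval_cases j
    · exact hv
    · rfl
    · rfl
    · rfl
    · rfl
    · rfl
    · rfl
    · rfl
    · rfl
    · rfl
    · exact hw
  · intro ⟨j, hj⟩
    interval_cases j
    · -- v → S1 v
      show v ≠ S1 v ∧ symp v (S1 v) = 0 ∧ IsUnimodular ![v, S1 v]
      refine edge (by omega) _ _ ⟨3, by omega⟩ hv rfl (Or.inl (by norm_num [S1])) ?_
      rw [symp_formula _ _ (S1_supp v), hv]
      simp [S1, cc]
      ring
    · -- S1 v → S2 v
      show S1 v ≠ S2 v ∧ symp (S1 v) (S2 v) = 0 ∧ IsUnimodular ![S1 v, S2 v]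
      refine edge (by omega) _ _ ⟨4, by omega⟩ rfl rfl (Or.inl (by norm_num [S1, S2])) ?_
      rw [symp_formula _ _ (S2_supp v)]
      simp [S1, S2, cc]
    · -- S2 v → S3 v
      show S2 v ≠ S3 v ∧ symp (S2 v) (S3 v) = 0 ∧ IsUnimodular ![S2 v, S3 v]
      refine edge (by omega) _ _ ⟨3, by omega⟩ rfl rfl (Or.inl (by norm_num [S2, S3])) ?_
      rw [symp_formula _ _ (S3_supp v)]
      simp [S2, S3, cc]
    · -- S3 v → S4 v
      show S3 v ≠ S4 v ∧ symp (S3 v) (S4 v) = 0 ∧ IsUnimodular ![S3 v, S4 v]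
      refine edge (by omega) _ _ ⟨4, by omega⟩ rfl rfl (Or.inr (by norm_num [S3, S4])) ?_
      rw [symp_formula _ _ (S4_supp v)]
      simp [S3, S4, cc]
    · -- S4 v → E0
      show S4 v ≠ E0 ∧ symp (S4 v) E0 = 0 ∧ IsUnimodular ![S4 v, E0]
      refine edge (by omega) _ _ ⟨3, by omega⟩ rfl rfl (Or.inr (by norm_num [S4, E0])) ?_
      rw [symp_formula _ _ E0_supp]
      simp [S4, E0]
    · -- E0 → S4 w
      show E0 ≠ S4 w ∧ symp E0 (S4 w) = 0 ∧ IsUnimodular ![E0, S4 w]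
      refine edge (by omega) _ _ ⟨3, by omega⟩ rfl rfl (Or.inl (by norm_num [S4, E0])) ?_
      rw [symp_formula _ _ (S4_supp w)]
      simp [S4, E0]
    · -- S4 w → S3 w
      show S4 w ≠ S3 w ∧ symp (S4 w) (S3 w) = 0 ∧ IsUnimodular ![S4 w, S3 w]
      refine edge (by omega) _ _ ⟨4, by omega⟩ rfl rfl (Or.inl (by norm_num [S3, S4])) ?_
      rw [symp_formula _ _ (S3_supp w)]
      simp [S3, S4, cc]
    · -- S3 w → S2 w
      show S3 w ≠ S2 w ∧ symp (S3 w) (S2 w) = 0 ∧ IsUnimodular ![S3 w, S2 w]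
      refine edge (by omega) _ _ ⟨3, by omega⟩ rfl rfl (Or.inr (by norm_num [S2, S3])) ?_
      rw [symp_formula _ _ (S2_supp w)]
      simp [S2, S3, cc]
    · -- S2 w → S1 w
      show S2 w ≠ S1 w ∧ symp (S2 w) (S1 w) = 0 ∧ IsUnimodular ![S2 w, S1 w]
      refine edge (by omega) _ _ ⟨4, by omega⟩ rfl rfl (Or.inr (by norm_num [S1, S2])) ?_
      rw [symp_formula _ _ (S1_supp w)]
      simp [S1, S2, cc]
    · -- S1 w → w
      show S1 w ≠ w ∧ symp (S1 w) w = 0 ∧ IsUnimodular ![S1 w, w]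
      refine edge (by omega) _ _ ⟨3, by omega⟩ rfl hw (Or.inr (by norm_num [S1])) ?_
      rw [symp_anticomm, symp_formula _ _ (S1_supp w), hw]
      simp [S1, cc]
      ring

/-- the graph on vectors of `ℤ^{2(g+1)}` with `a_1`-coordinate `1`,
with edges the rank-2 isotropic unimodular pairs, is connected. -/
theorem stmt3 (g : ℕ) (hg : 2 ≤ g) (v w : Fin (2 * (g + 1)) → ℤ)
    (hv : v ⟨0, by omega⟩ = 1) (hw : w ⟨0, by omega⟩ = 1) :
    ∃ (N : ℕ) (c : Fin (N + 1) → Fin (2 * (g + 1)) → ℤ),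
      c 0 = v ∧ c (Fin.last N) = w ∧ (∀ i, c i ⟨0, by omega⟩ = 1) ∧
      ∀ i : Fin N, c i.castSucc ≠ c i.succ ∧ symp (c i.castSucc) (c i.succ) = 0 ∧
        IsUnimodular ![c i.castSucc, c i.succ] := by
  obtain ⟨k, rfl⟩ : ∃ k, g = k + 2 := ⟨g - 2, by omega⟩
  exact path_exists v w hv hw

end Paper
end
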